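/- Let x ≥ 3, σ = √x, and suppose n ≥ 0. Then ∫_{x^{1/2+ε}}^{∞} exp( n log t − ∫_0^t arctan(u/(x+σ)) du ) dt ≪_{n,ε} x^{1/2−ε} exp(−x^{ε} π/16) for any fixed ε ∈ (0, 1/4) and x sufficiently large in terms of n and ε. -/

import Mathlib

open Real MeasureTheory intervalIntegral Set

lemma my_arctan_le_self {v : ℝ} (hv : 0 ≤ v) : Real.arctan v ≤ v := by
  have h : arctan v - arctan 0 = ∫ t in (0:ℝ)..v, 1/(1+t^2) := (integral_one_div_one_add_sq).symm
  rw [Real.arctan_zero, sub_zero] at h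
  rw [h]
  calc (∫ t in (0:ℝ)..v, 1/(1+t^2)) ≤ ∫ t in (0:ℝ)..v, 1 := by
        apply intervalIntegral.integral_mono_on hv
        · exact (continuous_const.div (by continuity) (fun t => by positivity)).intervalIntegrable _ _
        · exact intervalIntegrable_const
        · intro t ht; rw [div_le_one (by positivity)]; nlinarith [sq_nonneg t]
    _ = v := by simp

lemma my_half_le_arctan {v : ℝ} (h0 : 0 ≤ v) (h1 : v ≤ 1) : v/2 ≤ Real.arctan v := by
  have h : arctan v - arctan 0 = ∫ t in (0:ℝ)..v, 1/(1+t^2) := (integral_one_div_one_add_sq).symm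
  rw [Real.arctan_zero, sub_zero] at h
  rw [h]
  calc v/2 = ∫ t in (0:ℝ)..v, (1:ℝ)/2 := by simp [mul_comm]; ring
    _ ≤ ∫ t in (0:ℝ)..v, 1/(1+t^2) := by
        apply intervalIntegral.integral_mono_on h0 intervalIntegrable_const
        · exact (continuous_const.div (by continuity) (fun t => by positivity)).intervalIntegrable _ _
        · intro t ht
          rw [Set.mem_Icc] at ht
          rw [div_le_div_iff₀ (by norm_num) (by positivity)]
          nlinarith [ht.1, ht.2]

set_option maxHeartbeats 1600000 in
/-- Tail bound for the Gamma-ratio integrand: for fixed `n` and `ε ∈ (0,1/4)`,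
with `σ = √x`, for all sufficiently large `x ≥ 3`,
`∫_{x^{1/2+ε}}^∞ exp(n log t − ∫_0^t arctan(u/(x+σ)) du) dt ≪ x^{1/2−ε} e^{−x^ε π/16}`. -/
theorem gamma_ratio_tail_bound (n : ℕ) (ε : ℝ) (hε : 0 < ε) (hε' : ε < 1 / 4) :
    ∃ C x₀ : ℝ, 0 < C ∧ 3 ≤ x₀ ∧ ∀ x : ℝ, x₀ ≤ x →
      (∫ t in Set.Ioi (x ^ ((1:ℝ)/2 + ε)),
          Real.exp ((n : ℝ) * Real.log t -
            ∫ u in (0:ℝ)..t, Real.arctan (u / (x + Real.sqrt x))))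
        ≤ C * x ^ ((1:ℝ)/2 - ε) * Real.exp (-(x ^ ε) * π / 16) := by
  set M : ℝ := (n : ℝ) + 1 with hM
  have hM1 : 1 ≤ M := by
    have : (0:ℝ) ≤ (n:ℝ) := Nat.cast_nonneg n
    simp only [hM]; linarith
  have hMpos : 0 < M := by linarith
  set K : ℝ := Real.log (32 * M) with hK
  have hK0 : 0 ≤ K := Real.log_nonneg (by linarith)
  set Y₀ : ℝ := 16*(M+1)*K + 16*(M+1)/ε + 17 with hY
  have hY1 : 1 ≤ Y₀ := by
    have : 0 ≤ 16*(M+1)*K := by positivity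
    have : 0 ≤ 16*(M+1)/ε := by positivity
    simp only [hY]; linarith
  have hY0 : 0 < Y₀ := by linarith
  clear_value M K Y₀
  refine ⟨1, max 3 (Y₀ ^ (1/ε)), one_pos, le_max_left _ _, fun x hx => ?_⟩
  have hx3 : 3 ≤ x := le_trans (le_max_left _ _) hx
  have hx1 : 1 ≤ x := by linarith
  have hx0 : 0 < x := by linarith
  -- x^ε ≥ Y₀
  have hy : Y₀ ≤ x ^ ε := by
    have h1 : Y₀ ^ (1/ε) ≤ x := le_trans (le_max_right _ _) hx
    have h2 : (Y₀ ^ (1/ε)) ^ ε ≤ x ^ ε :=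
      Real.rpow_le_rpow (Real.rpow_nonneg hY0.le _) h1 hε.le
    rwa [← Real.rpow_mul hY0.le, one_div, inv_mul_cancel₀ hε.ne', Real.rpow_one] at h2
  set y : ℝ := x ^ ε with hydef
  have hy1 : 1 ≤ y := le_trans hY1 hy
  -- notation
  set s : ℝ := x + Real.sqrt x with hsdef
  set T : ℝ := x ^ ((1:ℝ)/2 + ε) with hTdef
  have hsqrt0 : 0 ≤ Real.sqrt x := Real.sqrt_nonneg x
  have hs0 : 0 < s := by positivity
  have hT1 : 1 ≤ T := Real.one_le_rpow hx1 (by linarith)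
  have hT0 : 0 < T := by linarith
  have hTx : T ≤ x := by
    have := Real.rpow_le_rpow_of_exponent_le hx1 (show (1:ℝ)/2 + ε ≤ 1 by linarith)
    rwa [Real.rpow_one] at this
  have hTs : T ≤ s := by
    have : x ≤ s := by simp only [hsdef]; linarith
    linarith
  have hsx : s ≤ 2 * x := by
    have h := Real.sqrt_le_sqrt (show x ≤ x^2 by nlinarith only [hx1, hx0.le])
    rw [Real.sqrt_sq hx0.le] at h
    simp only [hsdef]; linarith
  clear_value s T
  -- T^2 / s ≥ y^2 / 2
  have hT2 : T ^ 2 = x ^ (1 + 2*ε) := by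
    rw [hTdef, ← Real.rpow_natCast (x ^ ((1:ℝ)/2+ε)) 2, ← Real.rpow_mul hx0.le]
    norm_num; ring_nf
  have hy2 : y ^ 2 = x ^ (2*ε) := by
    rw [hydef, ← Real.rpow_natCast (x ^ ε) 2, ← Real.rpow_mul hx0.le]
    norm_num; ring_nf
  have hT2s : y ^ 2 / 2 ≤ T ^ 2 / s := by
    rw [hy2]
    have h1 : T ^ 2 = x * x ^ (2*ε) := by
      rw [hT2, Real.rpow_one_add' hx0.le (by positivity)]
    rw [h1, div_le_div_iff₀ (by norm_num) hs0]
    have h2 : (0:ℝ) ≤ x ^ (2*ε) := by positivity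
    have h3 : x ^ (2*ε) * s ≤ x ^ (2*ε) * (2*x) := mul_le_mul_of_nonneg_left hsx h2
    linarith only [h3]
  -- arctan slope
  set a : ℝ := Real.arctan (T / s) with hadef
  have hvs : T / s ≤ 1 := div_le_one_of_le₀ hTs hs0.le
  have hvs0 : 0 ≤ T / s := by positivity
  have ha_low : T / (2 * s) ≤ a := by
    have h := my_half_le_arctan hvs0 hvs
    rw [div_div, mul_comm] at h
    exact h
  have ha_pos : 0 < a := lt_of_lt_of_le (by positivity) ha_low
  have ha_hi : a ≤ T / s := my_arctan_le_self hvs0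
  clear_value a
  have hia : 1 / a ≤ 4 * x := by
    have h1 : (0:ℝ) < T / (2*s) := by positivity
    have h2 : 1 / a ≤ 1 / (T/(2*s)) := one_div_le_one_div_of_le h1 ha_low
    rw [one_div_div] at h2
    have h3 : 2*s/T ≤ 2*s := div_le_self (by positivity) hT1
    linarith
  -- the primitive
  set I : ℝ → ℝ := fun t => ∫ u in (0:ℝ)..t, Real.arctan (u / s) with hIdef
  have hcont : Continuous fun u : ℝ => Real.arctan (u / s) := by
    exact Real.continuous_arctan.comp (continuous_id.div_const s)
  have hIcont : Continuous I :=
    intervalIntegral.continuous_primitive (fun a b => hcont.intervalIntegrable a b) 0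
  have hIsplit : ∀ t : ℝ, I T + (∫ u in T..t, Real.arctan (u / s)) = I t := by
    intro t
    rw [hIdef]
    exact intervalIntegral.integral_add_adjacent_intervals
      (hcont.intervalIntegrable _ _) (hcont.intervalIntegrable _ _)
  have hIT' : (∫ u in (0:ℝ)..T, u / (2*s)) ≤ I T := by
    rw [hIdef]
    apply intervalIntegral.integral_mono_on hT0.le _ (hcont.intervalIntegrable _ _)
    · intro u hu
      have h1 : 0 ≤ u / s := div_nonneg hu.1 hs0.le
      have h2 : u / s ≤ 1 := div_le_one_of_le₀ (le_trans hu.2 hTs) hs0.le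
      have h := my_half_le_arctan h1 h2
      rw [div_div, mul_comm] at h
      exact h
    · exact ((continuous_id.div_const _)).intervalIntegrable _ _
  have hIapp : ∀ t : ℝ, (∫ u in (0:ℝ)..t, Real.arctan (u / s)) = I t := fun t => rfl
  clear_value I
  simp_rw [hIapp]
  -- lower bound on I T
  have hIT : T ^ 2 / (4 * s) ≤ I T := by
    have hint := hIT'
    have hval : (∫ u in (0:ℝ)..T, u / (2*s)) = T ^ 2 / (4 * s) := by
      rw [intervalIntegral.integral_div, integral_id]
      field_simp
      ring
    linarith [hint, hval ▸ hint]
  -- linear growth of I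
  have hIlin : ∀ t, T ≤ t → I T + a * (t - T) ≤ I t := by
    intro t ht
    have hsplit : I T + (∫ u in T..t, Real.arctan (u / s)) = I t := hIsplit t
    have hmono : (∫ u in T..t, (a : ℝ)) ≤ ∫ u in T..t, Real.arctan (u / s) := by
      apply intervalIntegral.integral_mono_on ht intervalIntegrable_const
        (hcont.intervalIntegrable _ _)
      intro u hu
      rw [hadef]
      exact Real.arctan_strictMono.monotone (by gcongr; exact hu.1)
    rw [intervalIntegral.integral_const, smul_eq_mul] at hmono
    calc I T + a * (t - T) = I T + (t - T) * a := by ring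
      _ ≤ I T + ∫ u in T..t, Real.arctan (u / s) := by linarith
      _ = I t := hsplit
  -- pointwise bound
  set b : ℝ := 7 * a / 8 with hbdef
  have hb0 : 0 < b := by positivity
  set B : ℝ := (8 * M / a) ^ (n+1) * Real.exp (a * T - I T) with hBdef
  have hB0 : 0 < B := by positivity
  have hpt : ∀ t ∈ Set.Ioi T, Real.exp ((n:ℝ) * Real.log t - I t) ≤ B * Real.exp (-b * t) := by
    intro t ht
    have htT : T ≤ t := le_of_lt ht
    have ht1 : 1 ≤ t := le_trans hT1 htT
    have ht0 : 0 < t := by linarith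
    -- exp(n log t) = t^n ≤ t^(n+1) ≤ (8M/a)^(n+1) exp(a t / 8)
    have h1 : Real.exp ((n:ℝ) * Real.log t) = t ^ n := by
      rw [← Real.log_pow, Real.exp_log (by positivity)]
    have h2 : t ^ n ≤ t ^ (n+1) := pow_le_pow_right₀ ht1 (Nat.le_succ n)
    have h3 : t ^ (n+1) ≤ (8 * M / a) ^ (n+1) * Real.exp (a * t / 8) := by
      have key : t = (a * t / (8 * M)) * (8 * M / a) := by
        field_simp
      have hle : a * t / (8 * M) ≤ Real.exp (a * t / (8 * M)) := by
        have := Real.add_one_le_exp (a * t / (8 * M))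
        linarith
      have hnn : 0 ≤ a * t / (8 * M) := by positivity
      calc t ^ (n+1) = (a * t / (8 * M)) ^ (n+1) * (8 * M / a) ^ (n+1) := by
            rw [← mul_pow, ← key]
        _ ≤ (Real.exp (a * t / (8 * M))) ^ (n+1) * (8 * M / a) ^ (n+1) := by
            apply mul_le_mul_of_nonneg_right (pow_le_pow_left₀ hnn hle _) (by positivity)
        _ = (8 * M / a) ^ (n+1) * (Real.exp (a * t / (8 * M))) ^ (n+1) := by ring
        _ = (8 * M / a) ^ (n+1) * Real.exp ((n+1 : ℕ) * (a * t / (8*M))) := by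
            rw [← Real.exp_nat_mul]
        _ = (8 * M / a) ^ (n+1) * Real.exp (a * t / 8) := by
            congr 1
            push_cast
            rw [← hM]
            field_simp
    have h4 : I T + a * (t - T) ≤ I t := hIlin t htT
    calc Real.exp ((n:ℝ) * Real.log t - I t)
        = Real.exp ((n:ℝ) * Real.log t) * Real.exp (- I t) := by rw [← Real.exp_add]; ring_nf
      _ ≤ (8 * M / a) ^ (n+1) * Real.exp (a * t / 8) * Real.exp (-(I T + a * (t - T))) := by
          apply mul_le_mul
          · rw [h1]; exact le_trans h2 h3
          · exact Real.exp_le_exp.mpr (by linarith)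
          · positivity
          · positivity
      _ = B * Real.exp (-b * t) := by
          rw [hBdef, hbdef, mul_assoc, ← Real.exp_add, mul_assoc, ← Real.exp_add]
          congr 1
          ring
  -- integrability
  have hg_int : IntegrableOn (fun t => B * Real.exp (-b * t)) (Set.Ioi T) :=
    (exp_neg_integrableOn_Ioi T hb0).const_mul B
  have hf_meas : Measurable (fun t => Real.exp ((n:ℝ) * Real.log t - I t)) :=
    ((Real.measurable_log.const_mul _).sub hIcont.measurable).exp
  have hf_int : IntegrableOn (fun t => Real.exp ((n:ℝ) * Real.log t - I t)) (Set.Ioi T) := by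
    apply Integrable.mono' hg_int hf_meas.aestronglyMeasurable.restrict
    rw [MeasureTheory.ae_restrict_iff' measurableSet_Ioi]
    filter_upwards with t ht
    rw [Real.norm_eq_abs, Real.abs_exp]
    exact hpt t ht
  -- integral comparison
  have hcomp : (∫ t in Set.Ioi T, Real.exp ((n:ℝ) * Real.log t - I t))
      ≤ ∫ t in Set.Ioi T, B * Real.exp (-b * t) :=
    setIntegral_mono_on hf_int hg_int measurableSet_Ioi hpt
  -- value of the dominating integral
  have hgval : (∫ t in Set.Ioi T, B * Real.exp (-b * t)) = B * (b⁻¹ * Real.exp (-(b * T))) := by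
    rw [MeasureTheory.integral_const_mul]
    congr 1
    have : (∫ t in Set.Ioi T, Real.exp (-b * t)) = ∫ t in Set.Ioi T, (fun y => Real.exp (-y)) (b * t) := by
      congr 1 with t; ring_nf
    rw [this, integral_comp_mul_left_Ioi (fun y => Real.exp (-y)) T hb0,
      integral_exp_neg_Ioi, smul_eq_mul]
  -- final estimate
  have hfinal : B * (b⁻¹ * Real.exp (-(b * T))) ≤ 1 * x ^ ((1:ℝ)/2 - ε) * Real.exp (-(x ^ ε) * π / 16) := by
    -- B * b⁻¹ * exp(-bT) = (8M/a)^(n+1) * (8/(7a)) * exp(aT/8 - I T)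
    have hexp : B * (b⁻¹ * Real.exp (-(b * T)))
        = (8 * M / a) ^ (n+1) * (8 / (7 * a)) * Real.exp (a * T / 8 - I T) := by
      have hexp0 : Real.exp (a*T - I T) * Real.exp (-(7*a/8*T)) = Real.exp (a*T/8 - I T) := by
        rw [← Real.exp_add]; congr 1; ring
      have hinv : ((7:ℝ)*a/8)⁻¹ = 8/(7*a) := by
        rw [inv_eq_one_div]
        field_simp
      rw [hBdef, hbdef]
      calc (8 * M / a) ^ (n+1) * Real.exp (a * T - I T) * ((7*a/8)⁻¹ * Real.exp (-(7*a/8 * T)))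
          = (8 * M / a) ^ (n+1) * (7*a/8)⁻¹ * (Real.exp (a*T - I T) * Real.exp (-(7*a/8*T))) := by
            ring
        _ = (8 * M / a) ^ (n+1) * (8 / (7 * a)) * Real.exp (a * T / 8 - I T) := by
            rw [hexp0, hinv]
    rw [hexp]
    -- exponent bound: aT/8 - I T ≤ -y^2/16
    have he1 : a * T / 8 - I T ≤ - (y^2 / 16) := by
      have h1 : a * T ≤ T ^ 2 / s := by
        have := mul_le_mul_of_nonneg_right ha_hi hT0.le
        calc a * T ≤ (T / s) * T := this
          _ = T ^ 2 / s := by ring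
      have h2 : T ^ 2 / (4 * s) = (T ^ 2 / s) / 4 := by ring
      have h3 : T ^ 2 / s ≥ y ^ 2 / 2 := hT2s
      linarith only [h1, h2, h3, hIT]
    -- coefficient bound
    have hc1 : (8 * M / a) ^ (n+1) ≤ (32 * M * x) ^ (n+1) := by
      apply pow_le_pow_left₀ (by positivity)
      calc 8 * M / a = 8 * M * (1 / a) := by ring
        _ ≤ 8 * M * (4 * x) := by
            exact mul_le_mul_of_nonneg_left hia (by positivity)
        _ = 32 * M * x := by ring
    have hc2 : (8:ℝ) / (7 * a) ≤ 32 * M * x := by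
      calc (8:ℝ) / (7 * a) = (8/7) * (1/a) := by ring
        _ ≤ (8/7) * (4 * x) := mul_le_mul_of_nonneg_left hia (by norm_num)
        _ ≤ 32 * M * x := by
            have h := mul_le_mul_of_nonneg_right hM1 hx0.le
            linarith only [h, hx0.le]
    have hMx1 : (1:ℝ) ≤ 32 * M * x := by
      have h := mul_le_mul hM1 hx1 zero_le_one (by linarith only [hM1])
      linarith only [h]
    have hcoef : (8 * M / a) ^ (n+1) * (8 / (7 * a)) ≤ (32 * M * x) ^ (n+2) := by
      calc (8 * M / a) ^ (n+1) * (8 / (7 * a)) ≤ (32 * M * x) ^ (n+1) * (32 * M * x) := by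
            apply mul_le_mul hc1 hc2 (by positivity) (by positivity)
        _ = (32 * M * x) ^ (n+2) := by ring
    -- (32Mx)^(n+2) = exp((n+2)(K + log x))
    have hlog : (32 * M * x) ^ (n+2) = Real.exp (((n:ℝ)+2) * (K + Real.log x)) := by
      rw [← Real.exp_log (show (0:ℝ) < 32 * M * x by positivity)]
      rw [← Real.exp_nat_mul]
      congr 1
      rw [Real.log_mul (by positivity) hx0.ne', hK]
      push_cast
      ring
    -- log x ≤ y / ε
    have hlogx : Real.log x ≤ y / ε := by
      have h1 : Real.log y = ε * Real.log x := by
        rw [hydef, Real.log_rpow hx0]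
      have h2 : Real.log y ≤ y := by
        have h := Real.log_le_sub_one_of_pos (show (0:ℝ) < y by linarith only [hy1])
        linarith only [h]
      rw [le_div_iff₀ hε]
      have h3 : Real.log x * ε = Real.log y := by rw [h1]; ring
      linarith only [h2, h3]
    -- main numeric inequality
    have hpi : π ≤ 4 := Real.pi_le_four
    have hnum : ((n:ℝ)+2) * (K + Real.log x) - y^2/16 ≤ -(y * π / 16) := by
      have hn2 : ((n:ℝ)+2) = M + 1 := by rw [hM]; ring
      rw [hn2]
      obtain ⟨E, hE⟩ : ∃ E : ℝ, E = (M+1)/ε := ⟨_, rfl⟩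
      have hY₀E : Y₀ = 16*(M+1)*K + 16*E + 17 := by rw [hE, hY]; ring
      have hEy : (M+1) * Real.log x ≤ E * y := by
        have h := mul_le_mul_of_nonneg_left hlogx (show (0:ℝ) ≤ M+1 by linarith only [hM1])
        have h2 : (M+1)*(y/ε) = E*y := by rw [hE]; ring
        linarith only [h, h2]
      have h2 : y * π / 16 ≤ y / 4 := by
        have h := mul_le_mul_of_nonneg_left hpi (show (0:ℝ) ≤ y by linarith only [hy1])
        linarith only [h]
      have h3 : Y₀ * y ≤ y ^ 2 := by
        have h := mul_le_mul_of_nonneg_right hy (show (0:ℝ) ≤ y by linarith only [hy1])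
        have h2 : y * y = y ^ 2 := by ring
        linarith only [h, h2]
      have h4 : 16*(M+1)*K + 16*E*y + 17 * y ≤ Y₀ * y := by
        have hc0 : (0:ℝ) ≤ 16*(M+1)*K := by positivity
        have hKy : 16*(M+1)*K ≤ 16*(M+1)*K * y := by
          have h := mul_le_mul_of_nonneg_left hy1 hc0
          linarith only [h]
        rw [hY₀E]
        have hmul : (16*(M+1)*K + 16*E + 17) * y = 16*(M+1)*K*y + 16*(E*y) + 17*y := by ring
        rw [hmul]
        linarith only [hKy]
      linarith only [hEy, h2, h3, h4, hy1]
    -- x^{1/2-ε} ≥ 1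
    have hxp : (1:ℝ) ≤ x ^ ((1:ℝ)/2 - ε) := Real.one_le_rpow hx1 (by linarith)
    calc (8 * M / a) ^ (n+1) * (8 / (7 * a)) * Real.exp (a * T / 8 - I T)
        ≤ (32 * M * x) ^ (n+2) * Real.exp (-(y^2/16)) := by
          apply mul_le_mul hcoef (Real.exp_le_exp.mpr he1) (by positivity) (by positivity)
      _ = Real.exp (((n:ℝ)+2) * (K + Real.log x) - y^2/16) := by
          rw [hlog, ← Real.exp_add]; ring_nf
      _ ≤ Real.exp (-(y * π / 16)) := Real.exp_le_exp.mpr hnum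
      _ = Real.exp (-(x ^ ε) * π / 16) := by rw [hydef]; ring_nf
      _ ≤ 1 * x ^ ((1:ℝ)/2 - ε) * Real.exp (-(x ^ ε) * π / 16) := by
          rw [one_mul]
          exact le_mul_of_one_le_left (Real.exp_pos _).le hxp
  calc (∫ t in Set.Ioi T, Real.exp ((n:ℝ) * Real.log t - I t))
      ≤ ∫ t in Set.Ioi T, B * Real.exp (-b * t) := hcomp
    _ = B * (b⁻¹ * Real.exp (-(b * T))) := hgval
    _ ≤ 1 * x ^ ((1:ℝ)/2 - ε) * Real.exp (-(x ^ ε) * π / 16) := hfinal
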